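/- Let G be any connected simple graph of order n ≥ 2 and 1 ≤ k ≤ n−1. Then the k-token graph F_k(G) is connected. -/

import Mathlib

open Finset SimpleGraph

open scoped Classical

variable {V : Type*}

/-- The `k`-token graph of `G`: vertices are the `k`-subsets of `V(G)`, two of them
adjacent iff their symmetric difference is a pair of adjacent vertices of `G`. -/
def tokenGraph [DecidableEq V] (G : SimpleGraph V) (k : ℕ) :
    SimpleGraph {s : Finset V // s.card = k} :=
  SimpleGraph.fromRel fun A B => ∃ a b, G.Adj a b ∧ symmDiff A.1 B.1 = {a, b}

/-- `G` is `t`-edge-connected: removing fewer than `t` edges leaves it connected. -/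
def EdgeConnected (G : SimpleGraph V) (t : ℕ) : Prop :=
  ∀ F : Finset (Sym2 V), F.card < t → (G.deleteEdges (F : Set (Sym2 V))).Connected

/-- Edge-connectivity `λ(G)`. -/
noncomputable def edgeConn (G : SimpleGraph V) : ℕ :=
  sSup {t | EdgeConnected G t}

/-- `G` is `t`-vertex-connected. -/
def VertexConnected [Fintype V] (G : SimpleGraph V) (t : ℕ) : Prop :=
  t < Fintype.card V ∧
    ∀ S : Finset V, S.card < t → (G.induce ((↑(Sᶜ) : Set V))).Connected

/-- Vertex-connectivity `κ(G)`. -/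
noncomputable def vertexConn [Fintype V] (G : SimpleGraph V) : ℕ :=
  sSup {t | VertexConnected G t}

lemma token_card' [DecidableEq V] {k : ℕ} {A : Finset V} (hA : A.card = k)
    {a v : V} (ha : a ∈ A) (hv : v ∉ A) :
    (insert v (A.erase a)).card = k := by
  have h1 : 1 ≤ A.card := Finset.card_pos.mpr ⟨a, ha⟩
  rw [Finset.card_insert_of_notMem (fun h => hv (Finset.mem_of_mem_erase h)),
    Finset.card_erase_of_mem ha]
  omega

lemma token_adj [DecidableEq V] {G : SimpleGraph V} {k : ℕ}
    {A B : {s : Finset V // s.card = k}} {a v : V} (ha : a ∈ A.1) (hv : v ∉ A.1)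
    (hadj : G.Adj a v) (hB : B.1 = insert v (A.1.erase a)) :
    (tokenGraph G k).Adj A B := by
  have hav : a ≠ v := hadj.ne
  have hne : A ≠ B := by
    intro h
    rw [← h] at hB
    exact hv (hB ▸ Finset.mem_insert_self v _)
  refine ⟨hne, Or.inl ⟨a, v, hadj, ?_⟩⟩
  ext x
  simp only [symmDiff_def, hB, Finset.sup_eq_union, Finset.mem_union, Finset.mem_sdiff,
    Finset.mem_insert, Finset.mem_singleton, Finset.mem_erase]
  constructor
  · rintro (⟨hxA, hx⟩ | ⟨hx, hxA⟩)
    · push_neg at hx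
      left
      rcases eq_or_ne x a with h | h
      · exact h
      · exact absurd (hx.2 h hxA) (by simp)
    · rcases hx with rfl | ⟨_, hx⟩
      · right; rfl
      · exact absurd hx hxA
  · rintro (rfl | rfl)
    · exact Or.inl ⟨ha, by rintro (rfl | ⟨h, _⟩) <;> simp_all⟩
    · exact Or.inr ⟨Or.inl rfl, hv⟩

lemma token_slide [DecidableEq V] {G : SimpleGraph V} {k : ℕ}
    {a b : V} (w : G.Walk a b) :
    ∀ (A B : {s : Finset V // s.card = k}), a ∈ A.1 → b ∉ A.1 →
    B.1 = insert b (A.1.erase a) → (tokenGraph G k).Reachable A B := by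
  induction w with
  | nil => intro A B ha hb _; exact absurd ha hb
  | @cons a c b h p ih =>
    intro A B ha hb hB
    have hac : a ≠ c := h.ne
    have hab : a ≠ b := fun h => hb (h ▸ ha)
    by_cases hc : c ∈ A.1
    · have hcb : c ≠ b := fun h => hb (h ▸ hc)
      set C : {s : Finset V // s.card = k} :=
        ⟨insert b (A.1.erase c), token_card' A.2 hc hb⟩ with hCdef
      have r1 : (tokenGraph G k).Reachable A C := ih A C hc hb rfl
      have hA' : a ∈ C.1 := by
        simp only [hCdef, Finset.mem_insert, Finset.mem_erase]
        exact Or.inr ⟨hac, ha⟩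
      have hc' : c ∉ C.1 := by
        simp only [hCdef, Finset.mem_insert, Finset.mem_erase]
        rintro (rfl | ⟨h, _⟩) <;> simp_all
      have hBC : B.1 = insert c (C.1.erase a) := by
        rw [hB, hCdef]
        ext x
        simp only [Finset.mem_insert, Finset.mem_erase]
        constructor
        · rintro (rfl | ⟨hxa, hxA⟩)
          · exact Or.inr ⟨hab.symm, Or.inl rfl⟩
          · rcases eq_or_ne x c with rfl | hxc
            · exact Or.inl rfl
            · exact Or.inr ⟨hxa, Or.inr ⟨hxc, hxA⟩⟩
        · rintro (rfl | ⟨hxa, rfl | ⟨hxc, hxA⟩⟩)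
          · exact Or.inr ⟨Ne.symm hac, hc⟩
          · exact Or.inl rfl
          · exact Or.inr ⟨hxa, hxA⟩
      exact r1.trans ⟨SimpleGraph.Walk.cons (token_adj hA' hc' h hBC) SimpleGraph.Walk.nil⟩
    · rcases eq_or_ne b c with rfl | hbc
      · exact ⟨SimpleGraph.Walk.cons (token_adj ha hc h hB) SimpleGraph.Walk.nil⟩
      · set A' : {s : Finset V // s.card = k} :=
          ⟨insert c (A.1.erase a), token_card' A.2 ha hc⟩ with hA'def
        have e1 : (tokenGraph G k).Adj A A' := token_adj ha hc h rfl
        have hcA' : c ∈ A'.1 := Finset.mem_insert_self c _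
        have hbA' : b ∉ A'.1 := by
          simp only [hA'def, Finset.mem_insert, Finset.mem_erase]
          rintro (rfl | ⟨_, hx⟩)
          · exact hbc rfl
          · exact hb hx
        have hBA' : B.1 = insert b (A'.1.erase c) := by
          rw [hB, hA'def]
          congr 1
          rw [Finset.erase_insert]
          simp only [Finset.mem_erase]
          rintro ⟨_, hx⟩
          exact hc hx
        exact SimpleGraph.Reachable.trans ⟨SimpleGraph.Walk.cons e1 SimpleGraph.Walk.nil⟩
          (ih A' B hcA' hbA' hBA')

theorem stmt16 [Fintype V] [DecidableEq V] (G : SimpleGraph V) (n k : ℕ)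
    (hn : Fintype.card V = n) (h2 : 2 ≤ n) (hG : G.Connected)
    (hk1 : 1 ≤ k) (hkn : k ≤ n - 1) :
    (tokenGraph G k).Connected := by
  have hkV : k ≤ Fintype.card V := by omega
  obtain ⟨s, -, hs⟩ := Finset.exists_subset_card_eq (s := (Finset.univ : Finset V))
    (n := k) (by simpa using hkV)
  have hne : Nonempty {s : Finset V // s.card = k} := ⟨⟨s, hs⟩⟩
  refine ⟨?_⟩
  have key : ∀ m (A B : {s : Finset V // s.card = k}), (A.1 \ B.1).card = m →
      (tokenGraph G k).Reachable A B := by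
    intro m
    induction m using Nat.strong_induction_on with
    | _ m ih =>
      intro A B hm
      by_cases hAB : A = B
      · rw [hAB]
      · have hABne : A.1 ≠ B.1 := fun h => hAB (Subtype.ext h)
        have h1 : (A.1 \ B.1).Nonempty := by
          rw [Finset.sdiff_nonempty]
          intro hsub
          exact hABne (Finset.eq_of_subset_of_card_le hsub (by rw [A.2, B.2]))
        have h2 : (B.1 \ A.1).Nonempty := by
          rw [Finset.sdiff_nonempty]
          intro hsub
          exact hABne (Finset.eq_of_subset_of_card_le hsub (by rw [A.2, B.2])).symm
        obtain ⟨a, hamem⟩ := h1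
        obtain ⟨b, hbmem⟩ := h2
        rw [Finset.mem_sdiff] at hamem hbmem
        obtain ⟨w⟩ := hG.preconnected a b
        have hbA : b ∉ A.1 := hbmem.2
        have haA : a ∈ A.1 := hamem.1
        set A' : {s : Finset V // s.card = k} :=
          ⟨insert b (A.1.erase a), token_card' A.2 haA hbA⟩ with hA'def
        have r1 : (tokenGraph G k).Reachable A A' := token_slide w A A' haA hbA rfl
        have hcard : (A'.1 \ B.1).card < m := by
          have : A'.1 \ B.1 = (A.1 \ B.1).erase a := by
            ext x
            simp only [hA'def, Finset.mem_sdiff, Finset.mem_insert, Finset.mem_erase]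
            constructor
            · rintro ⟨rfl | ⟨hxa, hxA⟩, hxB⟩
              · exact absurd hbmem.1 hxB
              · exact ⟨hxa, hxA, hxB⟩
            · rintro ⟨hxa, hxA, hxB⟩
              exact ⟨Or.inr ⟨hxa, hxA⟩, hxB⟩
          rw [this, Finset.card_erase_of_mem (Finset.mem_sdiff.mpr hamem), hm]
          have hm1 : 1 ≤ m := by
            rw [← hm]
            exact Finset.card_pos.mpr ⟨a, Finset.mem_sdiff.mpr hamem⟩
          omega
        exact r1.trans (ih _ hcard A' B rfl)
  intro A B
  exact key _ A B rfl
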